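/- Let p, m ∈ ℕ with p ≤ m and let I ⊆ ℝ be an open interval containing 0. Suppose g = (g₁, …, g_n) : I → ℂⁿ is such that each t ↦ t^p g_i(t) is of class C^m on I (i.e., g is a _pC^m-function), and suppose F is a C^m function on a neighborhood of g(0) in ℂⁿ (viewed as ℝ^{2n}). Then the composition F ∘ g is _pC^m, i.e., t ↦ t^p (F ∘ g)(t) is of class C^m near 0. -/

import Mathlib

open Set MeasureTheory intervalIntegral Filter Topology

namespace Stmt7Aux

variable {E : Type*} [NormedAddCommGroup E] [NormedSpace ℝ E]

/-- clamp to [0,1] -/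
noncomputable def cl (s : ℝ) : ℝ := max 0 (min s 1)

lemma cl_mem (s : ℝ) : cl s ∈ Icc (0:ℝ) 1 :=
  ⟨le_max_left _ _, max_le zero_le_one (min_le_right _ _)⟩

lemma cl_eq {s : ℝ} (hs : s ∈ Icc (0:ℝ) 1) : cl s = s := by
  simp [cl, min_eq_left hs.2, max_eq_right hs.1]

lemma continuous_cl : Continuous cl :=
  continuous_const.max (continuous_id.min continuous_const)

lemma cl_mul_mem_Ioo {a b : ℝ} (ha : a < 0) (hb : 0 < b) {t : ℝ} (ht : t ∈ Ioo a b)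
    (s : ℝ) : cl s * t ∈ Ioo a b := by
  obtain ⟨h0, h1⟩ := cl_mem s
  obtain ⟨h2, h3⟩ := ht
  constructor
  · rcases le_or_gt 0 t with h | h
    · exact ha.trans_le (mul_nonneg h0 h)
    · have : 1 * t ≤ cl s * t := mul_le_mul_of_nonpos_right h1 h.le
      rw [one_mul] at this; linarith
  · rcases le_or_gt 0 t with h | h
    · have : cl s * t ≤ 1 * t := mul_le_mul_of_nonneg_right h1 h
      rw [one_mul] at this; linarith
    · have : cl s * t ≤ 0 := mul_nonpos_of_nonneg_of_nonpos h0 h.le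
      linarith

lemma cl_mul_mem_Icc {l r : ℝ} (hl : l ≤ 0) (hr : 0 ≤ r) {t : ℝ} (ht : t ∈ Icc l r)
    (s : ℝ) : cl s * t ∈ Icc l r := by
  obtain ⟨h0, h1⟩ := cl_mem s
  obtain ⟨h2, h3⟩ := ht
  constructor
  · rcases le_or_gt 0 t with h | h
    · exact hl.trans (mul_nonneg h0 h)
    · have : 1 * t ≤ cl s * t := mul_le_mul_of_nonpos_right h1 h.le
      rw [one_mul] at this; linarith
  · rcases le_or_gt 0 t with h | h
    · have : cl s * t ≤ 1 * t := mul_le_mul_of_nonneg_right h1 h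
      rw [one_mul] at this; linarith
    · have : cl s * t ≤ 0 := mul_nonpos_of_nonneg_of_nonpos h0 h.le
      linarith

/-- Smoothness of the parametric integral `t ↦ ∫ s in 0..1, (cl s)^c • ψ (cl s * t)`. -/
lemma paramInt {a b : ℝ} (ha : a < 0) (hb : 0 < b) :
    ∀ (k : ℕ) (c : ℕ) (ψ : ℝ → E), ContDiffOn ℝ k ψ (Ioo a b) →
    ContDiffOn ℝ k (fun t : ℝ => ∫ s in (0:ℝ)..1, (cl s) ^ c • ψ (cl s * t)) (Ioo a b) := by
  intro k
  induction k with
  | zero =>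
    intro c ψ hψ
    simp only [Nat.cast_zero, contDiffOn_zero] at hψ ⊢
    rw [continuousOn_iff_continuous_restrict]
    have huc : Continuous (Function.uncurry
        fun (t : Ioo a b) (s : ℝ) => (cl s) ^ c • ψ (cl s * (t : ℝ))) := by
      apply Continuous.smul
      · exact (continuous_cl.comp continuous_snd).pow c
      · apply hψ.comp_continuous
        · exact (continuous_cl.comp continuous_snd).mul
            (continuous_subtype_val.comp continuous_fst)
        · rintro ⟨⟨t, ht⟩, s⟩
          exact cl_mul_mem_Ioo ha hb ht s
    exact continuous_parametric_intervalIntegral_of_continuous' huc 0 1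
  | succ k IH =>
    intro c ψ hψ
    have hI : IsOpen (Ioo a b) := isOpen_Ioo
    have hcast : ((k + 1 : ℕ) : WithTop ℕ∞) = (k : WithTop ℕ∞) + 1 := by push_cast; ring
    have hψd : DifferentiableOn ℝ ψ (Ioo a b) :=
      hψ.differentiableOn (by simp)
    have hψ' : ContDiffOn ℝ k (deriv ψ) (Ioo a b) :=
      hψ.deriv_of_isOpen hI (le_of_eq hcast.symm)
    -- the candidate derivative
    set Φ' : ℝ → E := fun t => ∫ s in (0:ℝ)..1, (cl s) ^ (c+1) • deriv ψ (cl s * t) with hΦ'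
    have hΦ'smooth : ContDiffOn ℝ k Φ' (Ioo a b) := IH (c+1) (deriv ψ) hψ'
    -- HasDerivAt at each point
    have key : ∀ t₀ ∈ Ioo a b,
        HasDerivAt (fun t : ℝ => ∫ s in (0:ℝ)..1, (cl s) ^ c • ψ (cl s * t)) (Φ' t₀) t₀ := by
      intro t₀ ht₀
      obtain ⟨ht₀a, ht₀b⟩ := ht₀
      set l : ℝ := (a + min t₀ 0) / 2 with hl
      set r : ℝ := (b + max t₀ 0) / 2 with hr
      have hal : a < l := by simp only [hl]; rcases le_total t₀ 0 with h | h <;>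
        simp [min_eq_left, min_eq_right, h] <;> linarith
      have hl0 : l ≤ 0 := by simp only [hl]; rcases le_total t₀ 0 with h | h <;>
        simp [min_eq_left, min_eq_right, h] <;> linarith
      have hlt : l < t₀ := by
        have : min t₀ 0 ≤ t₀ := min_le_left _ _
        have : a < min t₀ 0 := lt_min ht₀a ha
        simp only [hl]; linarith [min_le_left t₀ 0]
      have hrb : r < b := by simp only [hr]; rcases le_total t₀ 0 with h | h <;>
        simp [max_eq_left, max_eq_right, h] <;> linarith
      have h0r : 0 ≤ r := by simp only [hr]; rcases le_total t₀ 0 with h | h <;>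
        simp [max_eq_left, max_eq_right, h] <;> linarith
      have htr : t₀ < r := by
        have : max t₀ 0 < b := max_lt ht₀b hb
        simp only [hr]; linarith [le_max_left t₀ 0]
      have hsub : Icc l r ⊆ Ioo a b := fun x hx => ⟨hal.trans_le hx.1, hx.2.trans_lt hrb⟩
      set ε : ℝ := min (t₀ - l) (r - t₀) with hε
      have hεpos : 0 < ε := lt_min (by linarith) (by linarith)
      have hball : Metric.ball t₀ ε ⊆ Icc l r := by
        intro x hx
        rw [Metric.mem_ball, Real.dist_eq, abs_lt] at hx
        constructor
        · have := hx.1; have : t₀ - ε ≤ x := by linarith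
          have : t₀ - (t₀ - l) ≤ t₀ - ε := by
            have := min_le_left (t₀ - l) (r - t₀); simp only [hε] at *; linarith
          linarith
        · have := hx.2
          have : ε ≤ r - t₀ := min_le_right _ _
          linarith
      -- bound for deriv ψ on Icc l r
      obtain ⟨C, hC⟩ := (isCompact_Icc (a := l) (b := r)).exists_bound_of_continuousOn
        (hψ'.continuousOn.mono hsub)
      have hC0 : 0 ≤ C := le_trans (norm_nonneg _) (hC 0 ⟨hl0, h0r⟩)
      have hmeas : ∀ t ∈ Ioo a b, AEStronglyMeasurable
          (fun s => (cl s) ^ c • ψ (cl s * t)) (volume.restrict (Set.uIoc (0:ℝ) 1)) := by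
        intro t ht
        apply Continuous.aestronglyMeasurable
        apply Continuous.smul (continuous_cl.pow c)
        apply (hψ.continuousOn).comp_continuous (continuous_cl.mul continuous_const)
        intro s; exact cl_mul_mem_Ioo ha hb ht s
      have hder : ∀ (s : ℝ), ∀ t ∈ Metric.ball t₀ ε,
          HasDerivAt (fun u : ℝ => (cl s) ^ c • ψ (cl s * u))
            ((cl s) ^ (c+1) • deriv ψ (cl s * t)) t := by
        intro s t htb
        have hmem : cl s * t ∈ Ioo a b := hsub (cl_mul_mem_Icc hl0 h0r (hball htb) s)
        have hψat : HasDerivAt ψ (deriv ψ (cl s * t)) (cl s * t) :=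
          ((hψd (cl s * t) hmem).differentiableAt (hI.mem_nhds hmem)).hasDerivAt
        have hin : HasDerivAt (fun u : ℝ => cl s * u) (cl s) t := by
          simpa using (hasDerivAt_id t).const_mul (cl s)
        have hψat' : HasDerivAt ψ (deriv ψ (cl s * t)) ((fun u : ℝ => cl s * u) t) := hψat
        have hcomp := HasDerivAt.scomp (𝕜 := ℝ) (x := t) hψat' hin
        have := hcomp.const_smul ((cl s) ^ c)
        convert this using 1
        · rfl
        simp only [smul_smul, pow_succ]
      have main := hasDerivAt_integral_of_dominated_loc_of_deriv_le (μ := volume)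
        (a := (0:ℝ)) (b := 1) (F := fun t s => (cl s) ^ c • ψ (cl s * t))
        (F' := fun t s => (cl s) ^ (c+1) • deriv ψ (cl s * t))
        (x₀ := t₀) (bound := fun _ => C) (Metric.ball_mem_nhds t₀ hεpos)
        (by
          filter_upwards [hI.mem_nhds ⟨ht₀a, ht₀b⟩] with t ht
          exact hmeas t ht)
        (by
          apply Continuous.intervalIntegrable
          apply Continuous.smul (continuous_cl.pow c)
          apply (hψ.continuousOn).comp_continuous (continuous_cl.mul continuous_const)
          intro s; exact cl_mul_mem_Ioo ha hb ⟨ht₀a, ht₀b⟩ s)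
        (by
          apply Continuous.aestronglyMeasurable
          apply Continuous.smul (continuous_cl.pow (c+1))
          apply (hψ'.continuousOn).comp_continuous (continuous_cl.mul continuous_const)
          intro s; exact cl_mul_mem_Ioo ha hb ⟨ht₀a, ht₀b⟩ s)
        (by
          apply Eventually.of_forall
          intro s _ t htb
          rw [norm_smul]
          have h1 : |(cl s) ^ (c+1)| ≤ 1 := by
            rw [abs_pow]
            apply pow_le_one₀ (abs_nonneg _)
            rw [abs_le]; exact ⟨by linarith [(cl_mem s).1], (cl_mem s).2⟩
          have h2 : ‖deriv ψ (cl s * t)‖ ≤ C :=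
            hC _ (cl_mul_mem_Icc hl0 h0r (hball htb) s)
          calc |(cl s) ^ (c+1)| * ‖deriv ψ (cl s * t)‖ ≤ 1 * C := by
                apply mul_le_mul h1 h2 (norm_nonneg _) zero_le_one
            _ = C := one_mul C)
        intervalIntegrable_const
        (by
          apply Eventually.of_forall
          intro s _ t htb
          exact hder s t htb)
      exact main.2
    -- conclude C^{k+1}
    rw [hcast, contDiffOn_succ_iff_deriv_of_isOpen hI]
    refine ⟨fun t ht => ((key t ht).differentiableAt).differentiableWithinAt, ?_, ?_⟩
    · intro h; exact absurd h (by simp)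
    · exact hΦ'smooth.congr fun t ht => (key t ht).deriv

variable [CompleteSpace E]

lemma hasDerivAt_smul_self {a b : ℝ} (ha : a < 0) (hb : 0 < b) {g : ℝ → E}
    (hgc : ContinuousOn g (Ioo a b)) : HasDerivAt (fun t : ℝ => t • g t) (g 0) 0 := by
  rw [hasDerivAt_iff_tendsto_slope]
  have h1 : ∀ t ∈ ({(0:ℝ)}ᶜ : Set ℝ), g t = slope (fun t : ℝ => t • g t) 0 t := by
    intro t ht
    have htne : t ≠ 0 := ht
    simp only [slope, vsub_eq_sub, sub_zero, zero_smul, sub_zero, smul_smul]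
    rw [inv_mul_cancel₀ htne, one_smul]
  apply Tendsto.congr' (eventuallyEq_of_mem self_mem_nhdsWithin h1)
  exact ((hgc.continuousAt (isOpen_Ioo.mem_nhds ⟨ha, hb⟩)).tendsto).mono_left
    nhdsWithin_le_nhds

lemma div_one {a b : ℝ} (ha : a < 0) (hb : 0 < b) (k : ℕ) (g : ℝ → E)
    (hgc : ContinuousOn g (Ioo a b))
    (hq : ContDiffOn ℝ (k+1) (fun t : ℝ => t • g t) (Ioo a b)) :
    ContDiffOn ℝ k g (Ioo a b) := by
  have hI : IsOpen (Ioo a b) := isOpen_Ioo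
  have h0 : (0:ℝ) ∈ Ioo a b := ⟨ha, hb⟩
  set q : ℝ → E := fun t => t • g t with hqdef
  have hcast : ((k + 1 : ℕ) : WithTop ℕ∞) = (k : WithTop ℕ∞) + 1 := by push_cast; ring
  have hqd : DifferentiableOn ℝ q (Ioo a b) :=
    hq.differentiableOn (by simp)
  have hψ : ContDiffOn ℝ k (deriv q) (Ioo a b) := hq.deriv_of_isOpen hI (le_refl _)
  have hΦ := paramInt ha hb k 0 (deriv q) hψ
  have hkey : ∀ u ∈ Ioo a b, HasDerivAt q (deriv q u) u := fun u hu =>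
    ((hqd u hu).differentiableAt (hI.mem_nhds hu)).hasDerivAt
  apply hΦ.congr
  intro t ht
  rcases eq_or_ne t 0 with rfl | htne
  · have e1 : (∫ s in (0:ℝ)..1, (cl s) ^ 0 • deriv q (cl s * (0:ℝ))) = deriv q 0 := by
      have : (fun s => (cl s) ^ 0 • deriv q (cl s * (0:ℝ))) = fun _ : ℝ => deriv q 0 := by
        funext s; simp only [pow_zero, one_smul, mul_zero]
      rw [this]
      simp
    rw [e1]
    exact (hasDerivAt_smul_self ha hb hgc).unique (hkey 0 h0)
  · have huIcc : uIcc (0:ℝ) t ⊆ Ioo a b := (Set.ordConnected_Ioo).uIcc_subset h0 ht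
    have hftc : ∫ u in (0:ℝ)..t, deriv q u = q t - q 0 :=
      intervalIntegral.integral_eq_sub_of_hasDerivAt (fun u hu => hkey u (huIcc hu))
        ((hψ.continuousOn.mono huIcc).intervalIntegrable)
    have e2 : (∫ s in (0:ℝ)..1, (cl s) ^ 0 • deriv q (cl s * t))
        = ∫ s in (0:ℝ)..1, deriv q (s * t) := by
      apply intervalIntegral.integral_congr
      intro s hs
      rw [uIcc_of_le zero_le_one] at hs
      simp only [pow_zero, one_smul]
      rw [cl_eq hs]
    have e3 : (∫ s in (0:ℝ)..1, deriv q (s * t)) = t⁻¹ • ∫ u in (0:ℝ)..t, deriv q u := by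
      rw [intervalIntegral.integral_comp_mul_right (fun u => deriv q u) htne]
      norm_num
    rw [e2, e3, hftc]
    simp only [hqdef, zero_smul, sub_zero, smul_smul]
    rw [inv_mul_cancel₀ htne, one_smul]

lemma div_pow {a b : ℝ} (ha : a < 0) (hb : 0 < b) (p k : ℕ) (g : ℝ → E)
    (hgc : ContinuousOn g (Ioo a b))
    (h : ContDiffOn ℝ (k+1) (fun t : ℝ => t ^ (p+1) • g t) (Ioo a b)) :
    ContDiffOn ℝ k (fun t : ℝ => t ^ p • g t) (Ioo a b) := by
  apply div_one ha hb k (fun t => t ^ p • g t)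
    ((continuous_pow p).continuousOn.smul hgc)
  apply h.congr
  intro t ht
  rw [smul_smul]; congr 1; ring

lemma div_deriv {a b : ℝ} (ha : a < 0) (hb : 0 < b) :
    ∀ (p k : ℕ), p ≤ k → ∀ (g : ℝ → E), ContinuousOn g (Ioo a b) →
    ContDiffOn ℝ (k+1) (fun t : ℝ => t ^ (p+1) • g t) (Ioo a b) →
    ∃ r : ℝ → E, ContinuousOn r (Ioo a b) ∧ r 0 = ((p:ℝ)+1) • g 0 ∧
      ∀ t ∈ Ioo a b, deriv (fun u : ℝ => u ^ (p+1) • g u) t = t ^ p • r t := by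
  intro p
  induction p with
  | zero =>
    intro k hk g hgc hq
    have he : (fun u : ℝ => u ^ (0+1) • g u) = fun u : ℝ => u • g u := by
      funext u; rw [pow_one]
    refine ⟨deriv (fun u : ℝ => u ^ (0+1) • g u), ?_, ?_, ?_⟩
    · exact hq.continuousOn_deriv_of_isOpen isOpen_Ioo le_add_self
    · have h1 : HasDerivAt (fun u : ℝ => u • g u)
          (deriv (fun u : ℝ => u • g u) 0) 0 := by
        have := (hq.differentiableOn (by simp)) 0 ⟨ha, hb⟩
        rw [he] at this
        exact (this.differentiableAt (isOpen_Ioo.mem_nhds ⟨ha, hb⟩)).hasDerivAt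
      have h2 := hasDerivAt_smul_self ha hb hgc
      rw [he, h1.unique h2]
      norm_num
    · intro t _; rw [pow_zero, one_smul]
  | succ p IH =>
    intro k hk g hgc hq
    obtain ⟨k', rfl⟩ : ∃ k', k = k' + 1 := ⟨k - 1, by omega⟩
    set w : ℝ → E := fun u : ℝ => u ^ (p+1) • g u with hwdef
    have hw : ContDiffOn ℝ (k'+1) w (Ioo a b) := div_pow ha hb (p+1) (k'+1) g hgc hq
    obtain ⟨r', hr'c, hr'0, hr'⟩ := IH k' (by omega) g hgc hw
    refine ⟨fun t => g t + r' t, hgc.add hr'c, ?_, ?_⟩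
    · show g 0 + r' 0 = _
      rw [hr'0]
      push_cast
      module
    · intro t ht
      have hwd : HasDerivAt w (deriv w t) t :=
        (((hw.differentiableOn (by simp)) t ht).differentiableAt
          (isOpen_Ioo.mem_nhds ht)).hasDerivAt
      have hprod := (hasDerivAt_id' t).smul hwd
      have heq : (fun u : ℝ => u ^ (p+1+1) • g u) = fun u : ℝ => u • w u := by
        funext u; rw [hwdef, smul_smul]; congr 1; ring
      rw [heq, show (fun u : ℝ => u • w u) = (fun x : ℝ => x) • w from rfl, hprod.deriv, hr' t ht]
      simp only [hwdef, id_eq, one_smul, smul_smul, smul_add]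
      have h1 : t * t ^ p = t ^ (p+1) := by ring
      rw [h1, add_comm, one_mul]
/-- Main auxiliary result: composition of a `ₚC^m` function with a `C^m` function is `ₚC^m`. -/
theorem comp_pCm (p : ℕ) :
    ∀ {E F' : Type} [NormedAddCommGroup E] [NormedSpace ℝ E] [CompleteSpace E]
      [NormedAddCommGroup F'] [NormedSpace ℝ F'] (m : ℕ), p ≤ m →
    ∀ (a b : ℝ), a < 0 → 0 < b → ∀ (g : ℝ → E) (F : E → F') (W : Set E),
      ContinuousOn g (Ioo a b) →
      ContDiffOn ℝ m (fun t : ℝ => t ^ p • g t) (Ioo a b) →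
      W ∈ nhds (g 0) → ContDiffOn ℝ m F W →
      ∃ U ∈ nhds (0:ℝ), ContDiffOn ℝ m (fun t : ℝ => t ^ p • F (g t)) U := by
  induction p with
  | zero =>
    intro E F' _ _ _ _ _ m _ a b ha hb g F W hgc hg hW hF
    have h0W : g 0 ∈ interior W := mem_interior_iff_mem_nhds.2 hW
    refine ⟨Ioo a b ∩ g ⁻¹' (interior W), ?_, ?_⟩
    · exact (hgc.isOpen_inter_preimage isOpen_Ioo isOpen_interior).mem_nhds ⟨⟨ha, hb⟩, h0W⟩
    · have hgs : ContDiffOn ℝ m g (Ioo a b) := hg.congr (fun t _ => by simp)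
      have hcomp := (hF.mono interior_subset).comp (hgs.mono inter_subset_left)
        (fun t ht => ht.2)
      exact hcomp.congr (fun t _ => by simp [Function.comp])
  | succ p IH =>
    intro E F' _ _ _ _ _ m hpm a b ha hb g F W hgc hg hW hF
    obtain ⟨m', rfl⟩ : ∃ m', m = m' + 1 := ⟨m - 1, by omega⟩
    have hpm' : p ≤ m' := by omega
    have hI : IsOpen (Ioo a b) := isOpen_Ioo
    have h0I : (0:ℝ) ∈ Ioo a b := ⟨ha, hb⟩
    have h0W : g 0 ∈ interior W := mem_interior_iff_mem_nhds.2 hW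
    have hone : (1 : WithTop ℕ∞) ≤ ((m' + 1 : ℕ) : WithTop ℕ∞) := by
      exact_mod_cast Nat.succ_le_succ (Nat.zero_le m')
    have hle : ((m' : ℕ) : WithTop ℕ∞) ≤ ((m' + 1 : ℕ) : WithTop ℕ∞) := by
      exact_mod_cast Nat.le_succ m'
    have hcast : ((m' + 1 : ℕ) : WithTop ℕ∞) = (m' : WithTop ℕ∞) + 1 := by push_cast; ring
    -- the C^m function h = t^(p+1) • g
    set h : ℝ → E := fun t : ℝ => t ^ (p+1) • g t with hhdef
    -- w = t^p • g is C^(m')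
    have hw : ContDiffOn ℝ m' (fun t : ℝ => t ^ p • g t) (Ioo a b) := by
      apply div_pow ha hb p m' g hgc
      exact_mod_cast hg
    -- r with deriv h = t^p • r
    obtain ⟨r, hrc, hr0, hr⟩ := div_deriv ha hb p m' hpm' g hgc (by exact_mod_cast hg)
    -- deriv h is C^(m')
    have hdh : ContDiffOn ℝ m' (deriv h) (Ioo a b) := hg.deriv_of_isOpen hI (le_of_eq hcast.symm)
    -- t^p • r is C^(m') on I
    have hrs : ContDiffOn ℝ m' (fun t : ℝ => t ^ p • r t) (Ioo a b) :=
      hdh.congr (fun t ht => (hr t ht).symm)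
    -- F is C^(m') on W
    have hFm' : ContDiffOn ℝ m' F W := hF.of_le hle
    -- fderiv F is C^(m') on interior W
    have hDF : ContDiffOn ℝ m' (fderiv ℝ F) (interior W) := by
      apply ContDiffOn.fderiv_of_isOpen (hF.mono interior_subset) isOpen_interior
      rw [hcast]
    -- Fhat (x, y) ↦ (fderiv F x) y is C^(m') on interior W ×ˢ univ
    set Fhat : E × E → F' := fun q => fderiv ℝ F q.1 q.2 with hFhatdef
    have hFhat : ContDiffOn ℝ m' Fhat ((interior W) ×ˢ (univ : Set E)) := by
      have h1 : ContDiffOn ℝ m' (fun q : E × E => (fderiv ℝ F q.1, q.2))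
          ((interior W) ×ˢ (univ : Set E)) :=
        (hDF.comp contDiff_fst.contDiffOn (fun q hq => hq.1)).prodMk contDiff_snd.contDiffOn
      have h2 : ContDiff ℝ m' (fun q : (E →L[ℝ] F') × E => q.1 q.2) :=
        (isBoundedBilinearMap_apply.contDiff).of_le le_top
      exact h2.comp_contDiffOn h1
    have hWhat : (interior W) ×ˢ (univ : Set E) ∈ nhds ((g 0, g 0) : E × E) :=
      prod_mem_nhds (isOpen_interior.mem_nhds h0W) univ_mem
    have hWhat2 : (interior W) ×ˢ (univ : Set E) ∈ nhds ((g 0, r 0) : E × E) :=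
      prod_mem_nhds (isOpen_interior.mem_nhds h0W) univ_mem
    -- three IH applications
    obtain ⟨U₁, hU₁n, hU₁⟩ := IH m' hpm' a b ha hb g F W hgc hw hW hFm'
    obtain ⟨U₂, hU₂n, hU₂⟩ := IH m' hpm' a b ha hb (fun t => (g t, g t)) Fhat
      ((interior W) ×ˢ (univ : Set E)) (hgc.prodMk hgc)
      (by
        have : (fun t : ℝ => t ^ p • ((g t, g t) : E × E))
            = fun t : ℝ => ((t ^ p • g t, t ^ p • g t) : E × E) := rfl
        rw [this]
        exact hw.prodMk hw)
      hWhat hFhat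
    obtain ⟨U₃, hU₃n, hU₃⟩ := IH m' hpm' a b ha hb (fun t => (g t, r t)) Fhat
      ((interior W) ×ˢ (univ : Set E)) (hgc.prodMk hrc)
      (by
        have : (fun t : ℝ => t ^ p • ((g t, r t) : E × E))
            = fun t : ℝ => ((t ^ p • g t, t ^ p • r t) : E × E) := rfl
        rw [this]
        exact hw.prodMk hrs)
      hWhat2 hFhat
    -- the neighborhood U
    set V : Set ℝ := Ioo a b ∩ g ⁻¹' (interior W) with hVdef
    have hVopen : IsOpen V := hgc.isOpen_inter_preimage isOpen_Ioo isOpen_interior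
    set U : Set ℝ := interior U₁ ∩ interior U₂ ∩ interior U₃ ∩ V with hUdef
    have hUopen : IsOpen U :=
      ((isOpen_interior.inter isOpen_interior).inter isOpen_interior).inter hVopen
    have h0U : (0:ℝ) ∈ U :=
      ⟨⟨⟨mem_interior_iff_mem_nhds.2 hU₁n, mem_interior_iff_mem_nhds.2 hU₂n⟩,
        mem_interior_iff_mem_nhds.2 hU₃n⟩, h0I, h0W⟩
    -- the candidate derivative
    set D : ℝ → F' := fun t =>
      (((p:ℝ)+1) * t ^ p) • F (g t) + ((fderiv ℝ F (g t)) (t ^ p • r t)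
        - (((p:ℝ)+1) * t ^ p) • (fderiv ℝ F (g t)) (g t)) with hDdef
    -- D is C^(m') on U
    have hD : ContDiffOn ℝ m' D U := by
      have e : ∀ t : ℝ, D t = ((p:ℝ)+1) • (t ^ p • F (g t))
          + (t ^ p • Fhat (g t, r t) - ((p:ℝ)+1) • (t ^ p • Fhat (g t, g t))) := by
        intro t
        simp only [hDdef, hFhatdef, smul_smul, (fderiv ℝ F (g t)).map_smul]
      have hsub : U ⊆ interior U₁ ∩ interior U₂ ∩ interior U₃ := inter_subset_left
      have c₁ : ContDiffOn ℝ m' (fun t : ℝ => t ^ p • F (g t)) U :=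
        (hU₁.mono interior_subset).mono fun t ht => (hsub ht).1.1
      have c₂ : ContDiffOn ℝ m' (fun t : ℝ => t ^ p • Fhat (g t, g t)) U :=
        (hU₂.mono interior_subset).mono fun t ht => (hsub ht).1.2
      have c₃ : ContDiffOn ℝ m' (fun t : ℝ => t ^ p • Fhat (g t, r t)) U :=
        (hU₃.mono interior_subset).mono fun t ht => (hsub ht).2
      have := (c₁.const_smul (((p:ℝ)+1))).add (c₃.sub (c₂.const_smul (((p:ℝ)+1))))
      exact this.congr fun t _ => e t
    -- f has derivative D at every point of U
    have hder : ∀ t₀ ∈ U, HasDerivAt (fun t : ℝ => t ^ (p+1) • F (g t)) (D t₀) t₀ := by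
      intro t₀ ht₀U
      obtain ⟨_, ht₀I, ht₀W⟩ := ht₀U
      rcases eq_or_ne t₀ 0 with rfl | ht₀ne
      · -- at the origin, via slope
        rw [hasDerivAt_iff_tendsto_slope]
        have hlim : Tendsto (fun t : ℝ => t ^ p • F (g t)) (nhds 0)
            (nhds ((0:ℝ) ^ p • F (g 0))) := by
          apply ContinuousAt.tendsto
          exact ((continuous_pow p).continuousAt).smul
            ((hF.continuousOn.continuousAt hW).comp (hgc.continuousAt (hI.mem_nhds h0I)))
        have hslope : ∀ t ∈ ({(0:ℝ)}ᶜ : Set ℝ),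
            (fun t : ℝ => t ^ p • F (g t)) t = slope (fun t : ℝ => t ^ (p+1) • F (g t)) 0 t := by
          intro t ht
          have htne : t ≠ 0 := ht
          simp only [slope, vsub_eq_sub, sub_zero, zero_pow (Nat.succ_ne_zero p), zero_smul,
            sub_zero, smul_smul]
          congr 1
          field_simp
          ring
        have hD0 : D 0 = (0:ℝ) ^ p • F (g 0) := by
          simp only [hDdef, hr0, smul_smul]
          cases p with
          | zero => simp
          | succ q =>
            simp [zero_pow (Nat.succ_ne_zero q)]
        rw [hD0]
        exact (hlim.mono_left nhdsWithin_le_nhds).congr'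
          (eventuallyEq_of_mem self_mem_nhdsWithin hslope)
      · -- away from the origin
        have hh : HasDerivAt h (deriv h t₀) t₀ := by
          have := (hg.differentiableOn (zero_lt_one.trans_le hone).ne') t₀ ht₀I
          exact (this.differentiableAt (hI.mem_nhds ht₀I)).hasDerivAt
        have hpne : t₀ ^ (p+1) ≠ 0 := pow_ne_zero _ ht₀ne
        have hpinv : HasDerivAt (fun u : ℝ => (u ^ (p+1))⁻¹)
            (-(((p:ℝ)+1) * t₀ ^ p) / (t₀ ^ (p+1)) ^ 2) t₀ := by
          have := (hasDerivAt_pow (p+1) t₀).inv hpne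
          convert this using 1
          · rfl
          · rfl
          · rfl
          push_cast
          simp
        have hsm := hpinv.smul hh
        have hev : (g : ℝ → E) =ᶠ[nhds t₀] fun u : ℝ => (u ^ (p+1))⁻¹ • h u := by
          filter_upwards [isOpen_compl_singleton.mem_nhds
            (by simpa using ht₀ne : t₀ ∈ ({(0:ℝ)}ᶜ : Set ℝ))] with u hu
          have hune : u ≠ 0 := hu
          simp only [hhdef]
          rw [inv_smul_smul₀ (pow_ne_zero _ hune)]
        set G : E := (t₀ ^ (p+1))⁻¹ • deriv h t₀
          + (-(((p:ℝ)+1) * t₀ ^ p) / (t₀ ^ (p+1)) ^ 2) • h t₀ with hGdef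
        have hgd : HasDerivAt g G t₀ := by
          rw [hev.hasDerivAt_iff]
          exact hsm
        have hFd : HasFDerivAt F (fderiv ℝ F (g t₀)) (g t₀) := by
          have hmem : W ∈ nhds (g t₀) :=
            mem_nhds_iff.2 ⟨interior W, interior_subset, isOpen_interior, ht₀W⟩
          exact ((hF.contDiffAt hmem).differentiableAt (zero_lt_one.trans_le hone).ne').hasFDerivAt
        have hcomp : HasDerivAt (fun u : ℝ => F (g u)) (fderiv ℝ F (g t₀) G) t₀ :=
          hFd.comp_hasDerivAt t₀ hgd
        have hfull := (hasDerivAt_pow (p+1) t₀).smul hcomp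
        have hGval : t₀ ^ (p+1) • G = t₀ ^ p • r t₀ - (((p:ℝ)+1) * t₀ ^ p) • g t₀ := by
          rw [hGdef, smul_add, smul_smul, smul_smul, mul_inv_cancel₀ hpne, one_smul,
            hr t₀ ht₀I]
          simp only [hhdef, smul_smul]
          have hscal : t₀ ^ (p+1) * (-(((p:ℝ)+1) * t₀ ^ p) / (t₀ ^ (p+1)) ^ 2) * t₀ ^ (p+1)
              = -(((p:ℝ)+1) * t₀ ^ p) := by
            field_simp
          rw [hscal, neg_smul, ← sub_eq_add_neg]
        convert hfull using 1
        · rfl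
        have e1 : t₀ ^ (p+1) • fderiv ℝ F (g t₀) G
            = fderiv ℝ F (g t₀) (t₀ ^ p • r t₀)
              - (((p:ℝ)+1) * t₀ ^ p) • fderiv ℝ F (g t₀) (g t₀) := by
          rw [← _root_.map_smul, hGval]
          simp only [map_sub, _root_.map_smul]
        rw [Nat.add_sub_cancel, e1]
        simp only [hDdef]
        push_cast
        abel
    -- conclude
    refine ⟨U, hUopen.mem_nhds h0U, ?_⟩
    rw [hcast, contDiffOn_succ_iff_deriv_of_isOpen hUopen]
    refine ⟨fun t ht => ((hder t ht).differentiableAt).differentiableWithinAt,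
      fun hω => absurd hω (by simp), ?_⟩
    exact hD.congr fun t ht => (hder t ht).deriv
end Stmt7Aux
open Set

/-- Composition of `ₚC^m`-functions with `C^m` functions: let `p ≤ m`, let `I` be an open
interval around `0`, let `g : I → ℂⁿ` be continuous with `t ↦ t^p g t` of class `C^m` on
`I`, and let `F : ℂⁿ → ℂ` be `C^m` (over ℝ) on a neighborhood of `g 0`. Then
`t ↦ t^p F(g t)` is `C^m` near `0`. -/
theorem stmt7 (p m n : ℕ) (hpm : p ≤ m)
    (a b : ℝ) (ha : a < 0) (hb : 0 < b)
    (g : ℝ → Fin n → ℂ) (hgc : ContinuousOn g (Ioo a b))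
    (hg : ContDiffOn ℝ m (fun t : ℝ => (t : ℂ) ^ p • g t) (Ioo a b))
    (F : (Fin n → ℂ) → ℂ)
    (W : Set (Fin n → ℂ)) (hW : W ∈ nhds (g 0))
    (hF : ContDiffOn ℝ m F W) :
    ∃ U ∈ nhds (0 : ℝ),
      ContDiffOn ℝ m (fun t : ℝ => (t : ℂ) ^ p * F (g t)) U := by
  have hg' : ContDiffOn ℝ m (fun t : ℝ => t ^ p • g t) (Ioo a b) := by
    apply hg.congr
    intro t _
    funext i
    simp [Pi.smul_apply, Complex.real_smul, Complex.ofReal_pow]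
  obtain ⟨U, hU, hC⟩ := Stmt7Aux.comp_pCm p m hpm a b ha hb g F W hgc hg' hW hF
  refine ⟨U, hU, hC.congr fun t _ => ?_⟩
  rw [Complex.real_smul, Complex.ofReal_pow]
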